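/- arXiv:2007.03981 — 2 statements merged into one kernel-verified Lean document; each statement's English description precedes it below -/
import Mathlib

section
/- The function x ↦ 1/|x|² on ℝ⁴ is, as a tempered distribution, its own Fourier transform: for every Schwartz function g : ℝ⁴ → ℂ, ∫_{ℝ⁴} ĝ(x)/|x|² dx = ∫_{ℝ⁴} g(y)/|y|² dy. -/
open MeasureTheory Real RealInnerProductSpace Complex FourierTransform Set
open scoped Topology

open scoped Topology

noncomputable section NewtonAux

local notation "V" => EuclideanSpace ℝ (Fin 4)

lemma newton_gauss_int {t : ℝ} (ht : 0 < t) :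
    ∫ x : V, rexp (-(π * t) * ‖x‖ ^ 2) = (t ^ 2)⁻¹ := by
  rw [GaussianFourier.integral_rexp_neg_mul_sq_norm (by positivity)]
  rw [show Module.finrank ℝ V = 4 from finrank_euclideanSpace_fin]
  rw [show π / (π * t) = t⁻¹ by field_simp]
  rw [show ((4 : ℕ) / 2 : ℝ) = (2 : ℕ) by norm_num, Real.rpow_natCast]
  rw [inv_pow]

lemma newton_gauss_integrable {t : ℝ} (ht : 0 < t) :
    Integrable (fun x : V => rexp (-(π * t) * ‖x‖ ^ 2)) := by
  have h := (GaussianFourier.integrable_cexp_neg_mul_sq_norm_add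
    (b := ((π * t : ℝ) : ℂ)) (by simpa using by positivity) 0 (0 : V)).norm
  apply h.congr
  filter_upwards with x
  rw [zero_mul, add_zero]
  rw [show (-(((π * t : ℝ) : ℂ)) * (‖x‖ : ℂ) ^ 2) = ((-(π * t) * ‖x‖ ^ 2 : ℝ) : ℂ) by
    push_cast; ring]
  rw [← Complex.ofReal_exp, Complex.norm_real, Real.norm_eq_abs, abs_of_pos (Real.exp_pos _)]

lemma newton_cgauss_integrable {t : ℝ} (ht : 0 < t) :
    Integrable (fun x : V => Complex.exp (-((π : ℂ) * t) * (‖x‖ : ℂ) ^ 2)) := by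
  have h := GaussianFourier.integrable_cexp_neg_mul_sq_norm_add
    (b := ((π * t : ℝ) : ℂ)) (by simpa using by positivity) 0 (0 : V)
  apply h.congr
  filter_upwards with x
  push_cast
  ring_nf

lemma newton_norm_exp (x : V) (t : ℝ) :
    ‖Complex.exp (-((π : ℂ) * t) * (‖x‖ : ℂ) ^ 2)‖ = rexp (-(π * t) * ‖x‖ ^ 2) := by
  rw [show (-((π : ℂ) * t) * (‖x‖ : ℂ) ^ 2) = ((-(π * t) * ‖x‖ ^ 2 : ℝ) : ℂ) by push_cast; ring]
  rw [← Complex.ofReal_exp, Complex.norm_real, Real.norm_eq_abs, abs_of_pos (Real.exp_pos _)]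

/-- Integrability of the slice in `x`, for fixed `t > 0`. -/
lemma newton_slice_integrable (f : SchwartzMap V ℂ) {t : ℝ} (ht : 0 < t) :
    Integrable (fun x : V => f x * Complex.exp (-((π : ℂ) * t) * (‖x‖ : ℂ) ^ 2)) := by
  simp_rw [mul_comm (f _)]
  apply (f.integrable (μ := volume)).bdd_mul (c := 1)
  · exact (Complex.continuous_exp.comp (by fun_prop)).aestronglyMeasurable
  · refine Filter.Eventually.of_forall fun x => ?_
    rw [newton_norm_exp, neg_mul]
    exact Real.exp_le_one_iff.2 (neg_nonpos.2 (by positivity))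

/-- Product integrability on `V × (0,∞)`. -/
lemma newton_prod_integrable (f : SchwartzMap V ℂ) :
    Integrable (Function.uncurry fun (x : V) (t : ℝ) =>
        f x * Complex.exp (-((π : ℂ) * t) * (‖x‖ : ℂ) ^ 2))
      ((volume : Measure V).prod (volume.restrict (Ioi 0))) := by
  have hcont : Continuous (Function.uncurry fun (x : V) (t : ℝ) =>
      f x * Complex.exp (-((π : ℂ) * t) * (‖x‖ : ℂ) ^ 2)) := by
    apply Continuous.mul
    · exact f.continuous.comp continuous_fst
    · exact Complex.continuous_exp.comp (by fun_prop)
  rw [integrable_prod_iff' hcont.aestronglyMeasurable]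
  set A : ℝ := ∫ x : V, ‖f x‖ with hA
  set B : ℝ := (SchwartzMap.seminorm ℝ 0 0) f with hB
  have hA0 : 0 ≤ A := integral_nonneg fun x => norm_nonneg _
  have hB0 : 0 ≤ B := apply_nonneg _ _
  constructor
  · filter_upwards [self_mem_ae_restrict measurableSet_Ioi] with t ht
    exact newton_slice_integrable f ht
  · -- the function t ↦ ∫ₓ ‖f x‖ e^{-π t ‖x‖²}
    have hint : ∀ t ∈ Ioi (0:ℝ),
        (∫ x : V, ‖f x * Complex.exp (-((π : ℂ) * t) * (‖x‖ : ℂ) ^ 2)‖)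
          ≤ (2 * max A B) * (1 + t ^ 2)⁻¹ := by
      intro t ht
      have ht : (0:ℝ) < t := ht
      have hI1 : (∫ x : V, ‖f x * Complex.exp (-((π : ℂ) * t) * (‖x‖ : ℂ) ^ 2)‖) ≤ A := by
        rw [hA]
        apply integral_mono (newton_slice_integrable f ht).norm (f.integrable.norm)
        intro x
        dsimp only
        rw [norm_mul, newton_norm_exp]
        calc ‖f x‖ * rexp (-(π * t) * ‖x‖ ^ 2) ≤ ‖f x‖ * 1 := by
              gcongr
              rw [neg_mul]
              exact Real.exp_le_one_iff.2 (neg_nonpos.2 (by positivity))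
          _ = ‖f x‖ := mul_one _
      have hI2 : (∫ x : V, ‖f x * Complex.exp (-((π : ℂ) * t) * (‖x‖ : ℂ) ^ 2)‖)
          ≤ B * (t ^ 2)⁻¹ := by
        calc (∫ x : V, ‖f x * Complex.exp (-((π : ℂ) * t) * (‖x‖ : ℂ) ^ 2)‖)
            ≤ ∫ x : V, B * rexp (-(π * t) * ‖x‖ ^ 2) := by
              apply integral_mono (newton_slice_integrable f ht).norm
                ((newton_gauss_integrable ht).const_mul B)
              intro x
              dsimp only
              rw [norm_mul, newton_norm_exp]
              gcongr
              exact SchwartzMap.norm_le_seminorm ℝ f x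
          _ = B * (t ^ 2)⁻¹ := by rw [integral_const_mul, newton_gauss_int ht]
      rcases le_total t 1 with h1 | h1
      · calc _ ≤ A := hI1
          _ ≤ (2 * max A B) * (1 + t ^ 2)⁻¹ := by
            rw [← div_eq_mul_inv, le_div_iff₀ (by positivity)]
            nlinarith [le_max_left A B,
              mul_le_mul_of_nonneg_left (show t ^ 2 ≤ 1 by nlinarith) hA0]
      · calc _ ≤ B * (t ^ 2)⁻¹ := hI2
          _ ≤ (2 * max A B) * (1 + t ^ 2)⁻¹ := by
            have ht2 : (0:ℝ) < t ^ 2 := by positivity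
            have h1' : (1:ℝ) ≤ t ^ 2 := by nlinarith
            rw [← div_eq_mul_inv, ← div_eq_mul_inv,
              div_le_div_iff₀ ht2 (by positivity)]
            nlinarith [mul_nonneg (sub_nonneg.2 (le_max_right A B)) ht2.le,
              mul_nonneg (le_trans hB0 (le_max_right A B)) (sub_nonneg.2 h1')]
    apply Integrable.mono' (g := fun t => (2 * max A B) * (1 + t ^ 2)⁻¹)
      (integrable_inv_one_add_sq.const_mul _).restrict
    · exact ((hcont.comp continuous_swap).aestronglyMeasurable.norm.integral_prod_right'
        (ν := (volume : Measure V))).congr (by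
          filter_upwards with t
          rfl)
    · filter_upwards [self_mem_ae_restrict measurableSet_Ioi] with t ht
      rw [Real.norm_eq_abs, _root_.abs_of_nonneg (integral_nonneg fun x => norm_nonneg _)]
      simpa using hint t ht

end NewtonAux

section NewtonAux2
local notation "V" => EuclideanSpace ℝ (Fin 4)

/-- Heat kernel representation of `∫ f x / ‖x‖²`. -/
lemma newton_heat_rep (f : SchwartzMap V ℂ) :
    ∫ x : V, f x / (‖x‖ : ℂ) ^ 2
      = (π : ℂ) * ∫ t in Set.Ioi (0:ℝ),
          ∫ x : V, f x * Complex.exp (-((π : ℂ) * t) * (‖x‖ : ℂ) ^ 2) := by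
  have h0 : ∀ᵐ x : V, x ≠ (0:V) := by
    refine ae_iff.mpr ?_
    simpa using measure_singleton (0 : V)
  calc ∫ x : V, f x / (‖x‖ : ℂ) ^ 2
      = ∫ x : V, (π : ℂ) *
          ∫ t in Set.Ioi (0:ℝ), f x * Complex.exp (-((π : ℂ) * t) * (‖x‖ : ℂ) ^ 2) := by
        refine integral_congr_ae ?_
        filter_upwards [h0] with x hx
        have hxn : (0:ℝ) < ‖x‖ := norm_pos_iff.2 hx
        have hb : (0:ℝ) < π * ‖x‖ ^ 2 := by positivity
        have h1 : ∀ t : ℝ, Complex.exp (-((π : ℂ) * t) * (‖x‖ : ℂ) ^ 2)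
            = ((rexp (-(t * (π * ‖x‖ ^ 2))) : ℝ) : ℂ) := by
          intro t
          rw [Complex.ofReal_exp]
          congr 1
          push_cast
          ring
        rw [integral_const_mul]
        simp_rw [h1]
        rw [show (∫ t in Set.Ioi (0:ℝ), ((rexp (-(t * (π * ‖x‖ ^ 2))) : ℝ) : ℂ))
            = (((∫ t in Set.Ioi (0:ℝ), rexp (-(t * (π * ‖x‖ ^ 2)))) : ℝ) : ℂ) from
          integral_ofReal]
        have h2 : (∫ t in Set.Ioi (0:ℝ), rexp (-(t * (π * ‖x‖ ^ 2))))
            = (π * ‖x‖ ^ 2)⁻¹ := by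
          have h3 := integral_comp_mul_right_Ioi (fun u => rexp (-u)) 0 hb
          simp only [zero_mul] at h3
          rw [h3, integral_exp_neg_Ioi_zero, smul_eq_mul, mul_one]
        rw [h2]
        have hπ : (π : ℂ) ≠ 0 := Complex.ofReal_ne_zero.2 Real.pi_ne_zero
        have hxc : (‖x‖ : ℂ) ≠ 0 := Complex.ofReal_ne_zero.2 hxn.ne'
        push_cast
        field_simp
    _ = (π : ℂ) * ∫ x : V,
          ∫ t in Set.Ioi (0:ℝ), f x * Complex.exp (-((π : ℂ) * t) * (‖x‖ : ℂ) ^ 2) :=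
        integral_const_mul _ _
    _ = (π : ℂ) * ∫ t in Set.Ioi (0:ℝ),
          ∫ x : V, f x * Complex.exp (-((π : ℂ) * t) * (‖x‖ : ℂ) ^ 2) := by
        rw [integral_integral_swap (newton_prod_integrable f)]

end NewtonAux2

section NewtonAux3
local notation "V" => EuclideanSpace ℝ (Fin 4)

lemma newton_mult_formula (g : SchwartzMap V ℂ) {t : ℝ} (ht : 0 < t) :
    ∫ x : V, 𝓕 (g : V → ℂ) x * Complex.exp (-((π : ℂ) * t) * (‖x‖ : ℂ) ^ 2)
      = ((t : ℝ) ^ 2)⁻¹ • ∫ y : V, g y *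
          Complex.exp (-((π : ℂ) * (t⁻¹ : ℝ)) * (‖y‖ : ℂ) ^ 2) := by
  have hπ : (π : ℂ) ≠ 0 := Complex.ofReal_ne_zero.2 Real.pi_ne_zero
  have htc : (t : ℂ) ≠ 0 := Complex.ofReal_ne_zero.2 ht.ne'
  have hbre : (0:ℝ) < ((π : ℂ) * t).re := by
    rw [show ((π : ℂ) * (t : ℂ)) = ((π * t : ℝ) : ℂ) by push_cast; ring]
    simpa using (by positivity : (0:ℝ) < π * t)
  have hgauss : Integrable (fun v : V => Complex.exp (-((π : ℂ) * t) * (‖v‖ : ℂ) ^ 2)) :=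
    newton_cgauss_integrable ht
  have h1 := VectorFourier.integral_fourierIntegral_smul_eq_flip (L := innerₗ V)
    (μ := (volume : Measure V)) (ν := (volume : Measure V))
    Real.continuous_fourierChar continuous_inner g.integrable hgauss
  calc ∫ x : V, 𝓕 (g : V → ℂ) x * Complex.exp (-((π : ℂ) * t) * (‖x‖ : ℂ) ^ 2)
      = ∫ x : V, (VectorFourier.fourierIntegral 𝐞 volume (innerₗ V) (g : V → ℂ) x) •
          Complex.exp (-((π : ℂ) * t) * (‖x‖ : ℂ) ^ 2) := by
        simp_rw [smul_eq_mul]; rfl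
    _ = ∫ x : V, g x • VectorFourier.fourierIntegral 𝐞 volume (innerₗ V).flip
          (fun v : V => Complex.exp (-((π : ℂ) * t) * (‖v‖ : ℂ) ^ 2)) x := h1
    _ = ∫ x : V, g x • 𝓕 (fun v : V => Complex.exp (-((π : ℂ) * t) * (‖v‖ : ℂ) ^ 2)) x := by
        congr 1
        ext x
        congr 1
        show VectorFourier.fourierIntegral 𝐞 volume (innerₗ V).flip _ x = _
        rw [Real.fourier_eq]
        show (∫ v : V, 𝐞 (-(innerₗ V).flip v x) •
            Complex.exp (-((π : ℂ) * t) * (‖v‖ : ℂ) ^ 2)) = _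
        congr 1
        ext v
        congr 2
        rw [LinearMap.flip_apply, innerₗ_apply_apply]
        exact congrArg Neg.neg (real_inner_comm v x)
    _ = ∫ y : V, g y • (((π : ℂ) / ((π : ℂ) * t)) ^ ((Module.finrank ℝ V / 2 : ℂ)) *
          Complex.exp (-(π : ℂ) ^ 2 * (‖y‖ : ℂ) ^ 2 / ((π : ℂ) * t))) := by
        congr 1
        ext y
        rw [fourier_gaussian_innerProductSpace hbre]
    _ = ((t : ℝ) ^ 2)⁻¹ • ∫ y : V, g y *
          Complex.exp (-((π : ℂ) * (t⁻¹ : ℝ)) * (‖y‖ : ℂ) ^ 2) := by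
        have hc : ((π : ℂ) / ((π : ℂ) * t)) ^ ((Module.finrank ℝ V / 2 : ℂ))
            = ((t : ℂ) ^ 2)⁻¹ := by
          rw [show ((Module.finrank ℝ V : ℂ) / 2) = ((2 : ℕ) : ℂ) by
            rw [show Module.finrank ℝ V = 4 from finrank_euclideanSpace_fin]; norm_num]
          rw [Complex.cpow_natCast]
          rw [show (π : ℂ) / ((π : ℂ) * t) = (t : ℂ)⁻¹ by field_simp]
          rw [inv_pow]
        have hexp : ∀ y : V, (-(π : ℂ) ^ 2 * (‖y‖ : ℂ) ^ 2 / ((π : ℂ) * t))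
            = -((π : ℂ) * (t⁻¹ : ℝ)) * (‖y‖ : ℂ) ^ 2 := by
          intro y
          push_cast
          field_simp
        simp_rw [hc, hexp]
        rw [← integral_smul]
        congr 1
        ext y
        rw [Complex.real_smul, smul_eq_mul]
        push_cast
        ring
end NewtonAux3

local notation "V" => EuclideanSpace ℝ (Fin 4)

/-- The Newton kernel `x ↦ 1/|x|²` on `ℝ⁴` is its own Fourier transform as a
tempered distribution: for every Schwartz `g`, `∫ ĝ(x)/|x|² dx = ∫ g(y)/|y|² dy`. -/
theorem newton_kernel_self_dual_R4 :
    ∀ g : SchwartzMap (EuclideanSpace ℝ (Fin 4)) ℂ,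
      (∫ x : EuclideanSpace ℝ (Fin 4),
          (∫ y : EuclideanSpace ℝ (Fin 4),
            g y * Complex.exp (-(2 * (π : ℂ) * Complex.I * (⟪x, y⟫ : ℂ)))) / (‖x‖ : ℂ) ^ 2) =
        ∫ y : EuclideanSpace ℝ (Fin 4), g y / (‖y‖ : ℂ) ^ 2 := by
  intro g
  set G : SchwartzMap V ℂ := SchwartzMap.fourierTransformCLM ℂ g with hG
  set f₀ : ℝ → ℂ := fun s => ∫ y : V, g y *
    Complex.exp (-((π : ℂ) * s) * (‖y‖ : ℂ) ^ 2) with hf₀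
  have hGx : ∀ x : V, G x = 𝓕 (g : V → ℂ) x := by
    intro x
    rw [hG, SchwartzMap.fourierTransformCLM_apply]
    rfl
  calc (∫ x : V, (∫ y : V,
          g y * Complex.exp (-(2 * (π : ℂ) * Complex.I * (⟪x, y⟫ : ℂ)))) / (‖x‖ : ℂ) ^ 2)
      = ∫ x : V, G x / (‖x‖ : ℂ) ^ 2 := by
        congr 1
        ext x
        congr 1
        rw [hGx x, Real.fourier_eq']
        congr 1
        ext y
        rw [smul_eq_mul, mul_comm]
        congr 1
        push_cast
        rw [real_inner_comm y x]
        ring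
    _ = (π : ℂ) * ∫ t in Set.Ioi (0:ℝ),
          ∫ x : V, G x * Complex.exp (-((π : ℂ) * t) * (‖x‖ : ℂ) ^ 2) :=
        newton_heat_rep G
    _ = (π : ℂ) * ∫ t in Set.Ioi (0:ℝ), ((t : ℝ) ^ 2)⁻¹ • f₀ t⁻¹ := by
        congr 1
        refine setIntegral_congr_fun measurableSet_Ioi fun t ht => ?_
        have ht' : (0:ℝ) < t := ht
        calc (∫ x : V, G x * Complex.exp (-((π : ℂ) * t) * (‖x‖ : ℂ) ^ 2))
            = ∫ x : V, 𝓕 (g : V → ℂ) x * Complex.exp (-((π : ℂ) * t) * (‖x‖ : ℂ) ^ 2) := by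
              refine integral_congr_ae (Filter.Eventually.of_forall fun x => ?_)
              dsimp only
              rw [hGx x]
          _ = ((t : ℝ) ^ 2)⁻¹ • f₀ t⁻¹ := newton_mult_formula g ht'
    _ = (π : ℂ) * ∫ s in Set.Ioi (0:ℝ), f₀ s := by
        congr 1
        rw [← integral_comp_rpow_Ioi f₀ (p := (-1:ℝ)) (by norm_num)]
        refine setIntegral_congr_fun measurableSet_Ioi fun t ht => ?_
        have ht' : (0:ℝ) < t := ht
        rw [show |(-1:ℝ)| = 1 by norm_num, one_mul, Real.rpow_neg_one,
          show ((-1:ℝ) - 1) = -((2:ℕ):ℝ) by norm_num, Real.rpow_neg ht'.le,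
          Real.rpow_natCast]
    _ = ∫ y : V, g y / (‖y‖ : ℂ) ^ 2 := (newton_heat_rep g).symm
end

section
/- Let φ : ℝ → ℂ be a Schwartz function and define Φ : ℝ⁴ → ℂ by Φ(x) = ∫_ℝ e^{iπτ|x|²} φ(τ) dτ. Then Φ ∈ L¹(ℝ⁴), and its Fourier transform satisfies, for every y ∈ ℝ⁴ with y ≠ 0, Φ̂(y) = (1/(iπ|y|²)) ∫_ℝ φ'(τ) e^{−iπ|y|²/τ} dτ. -/
open MeasureTheory Real RealInnerProductSpace Complex Filter FourierTransform

lemma aux_ne (ε τ : ℝ) (hε : 0 < ε) : (ε:ℂ) - Complex.I * τ ≠ 0 := by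
  intro h
  have := congrArg Complex.re h
  simp at this; linarith

lemma aux_wc (ε : ℝ) : Continuous (fun τ : ℝ => (ε:ℂ) - Complex.I * τ) := by continuity

lemma aux_deriv (a ε τ : ℝ) (hε : 0 < ε) :
    HasDerivAt (fun t : ℝ => Complex.exp (-(a:ℂ) * ((ε:ℂ) - Complex.I * t)⁻¹))
      (-(Complex.I * a) / ((ε:ℂ) - Complex.I * τ)^2 *
        Complex.exp (-(a:ℂ) * ((ε:ℂ) - Complex.I * τ)⁻¹)) τ := by
  have h1 : HasDerivAt (fun t : ℝ => ((t:ℝ):ℂ)) 1 τ := by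
    simpa using (hasDerivAt_id τ).ofReal_comp
  have h2 : HasDerivAt (fun t : ℝ => (ε:ℂ) - Complex.I * t) (-Complex.I) τ := by
    simpa using (h1.const_mul Complex.I).const_sub (ε:ℂ)
  have h3 := (hasDerivAt_const τ (-(a:ℂ))).div h2 (aux_ne ε τ hε)
  simp only [div_eq_mul_inv] at h3
  have h4 := h3.cexp
  convert h4 using 1
  · funext t
    simp only [Pi.mul_apply, Pi.inv_apply, neg_mul]
  · simp only [Pi.mul_apply, Pi.inv_apply]
    rw [← div_eq_mul_inv]
    ring

lemma aux_norm_le (a ε τ : ℝ) (ha : 0 ≤ a) (hε : 0 ≤ ε) :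
    ‖Complex.exp (-(a:ℂ) * ((ε:ℂ) - Complex.I * τ)⁻¹)‖ ≤ 1 := by
  rw [Complex.norm_exp, Real.exp_le_one_iff]
  have h1 : (-(a:ℂ) * ((ε:ℂ) - Complex.I * τ)⁻¹).re
      = -a * (((ε:ℂ) - Complex.I * τ)⁻¹).re := by
    rw [show -(a:ℂ) = ((-a : ℝ) : ℂ) by push_cast; ring, Complex.re_ofReal_mul]
  rw [h1]
  have h2 : 0 ≤ (((ε:ℂ) - Complex.I * τ)⁻¹).re := by
    rw [Complex.inv_re]
    apply div_nonneg _ (Complex.normSq_nonneg _)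
    simp [hε]
  nlinarith

lemma aux_norm_w (ε τ : ℝ) (hε : 0 < ε) : ε ≤ ‖(ε:ℂ) - Complex.I * τ‖ := by
  calc ε = |ε| := (abs_of_pos hε).symm
    _ = |((ε:ℂ) - Complex.I * τ).re| := by simp
    _ ≤ ‖(ε:ℂ) - Complex.I * τ‖ := Complex.abs_re_le_norm _
    _ = ‖(ε:ℂ) - Complex.I * τ‖ := rfl

lemma aux_deriv_int (φ : SchwartzMap ℝ ℂ) : Integrable (deriv ⇑φ) volume := by
  have h : deriv ⇑φ = ⇑(SchwartzMap.derivCLM ℝ ℂ φ) :=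
    funext fun x => (SchwartzMap.derivCLM_apply ℝ φ x).symm
  rw [h]
  exact (SchwartzMap.derivCLM ℝ ℂ φ).integrable

lemma aux_ibp (φ : SchwartzMap ℝ ℂ) (a ε : ℝ) (ha : 0 < a) (hε : 0 < ε) :
    ∫ τ : ℝ, φ τ * (-(Complex.I * a) / ((ε:ℂ) - Complex.I * τ)^2 *
        Complex.exp (-(a:ℂ) * ((ε:ℂ) - Complex.I * τ)⁻¹))
      = - ∫ τ : ℝ, deriv (⇑φ) τ * Complex.exp (-(a:ℂ) * ((ε:ℂ) - Complex.I * τ)⁻¹) := by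
  set v : ℝ → ℂ := fun τ => Complex.exp (-(a:ℂ) * ((ε:ℂ) - Complex.I * τ)⁻¹) with hv
  set v' : ℝ → ℂ := fun τ =>
    -(Complex.I * a) / ((ε:ℂ) - Complex.I * τ)^2 * v τ with hv'
  have hvc : Continuous v :=
    Complex.continuous_exp.comp (continuous_const.mul
      ((aux_wc ε).inv₀ fun τ => aux_ne ε τ hε))
  have hv'c : Continuous v' :=
    (continuous_const.div ((aux_wc ε).pow 2)
      (fun τ => pow_ne_zero 2 (aux_ne ε τ hε))).mul hvc
  have hvle : ∀ τ, ‖v τ‖ ≤ 1 := fun τ => aux_norm_le a ε τ ha.le hε.le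
  have hv'le : ∀ τ, ‖v' τ‖ ≤ a / ε^2 := by
    intro τ
    rw [hv', norm_mul, norm_div]
    have h1 : ‖-(Complex.I * (a:ℂ))‖ = a := by
      simp [abs_of_pos ha]
    have h2 : ε^2 ≤ ‖((ε:ℂ) - Complex.I * τ)^2‖ := by
      rw [norm_pow]
      exact pow_le_pow_left₀ hε.le (aux_norm_w ε τ hε) 2
    calc ‖-(Complex.I * (a:ℂ))‖ / ‖((ε:ℂ) - Complex.I * τ)^2‖ * ‖v τ‖
        ≤ a / ε^2 * 1 := by
          apply mul_le_mul _ (hvle τ) (norm_nonneg _) (by positivity)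
          rw [h1]
          apply div_le_div_of_nonneg_left ha.le (by positivity) h2
      _ = a / ε^2 := mul_one _
  have hcont : Continuous (⇑φ) := φ.continuous
  have huv' : Integrable (⇑φ * v') volume := by
    apply Integrable.mono' ((φ.integrable.norm.mul_const (a/ε^2)))
      (hcont.mul hv'c).aestronglyMeasurable
    filter_upwards with τ
    simp only [Pi.mul_apply, norm_mul]
    exact mul_le_mul_of_nonneg_left (hv'le τ) (norm_nonneg _)
  have hu'v : Integrable (deriv ⇑φ * v) volume := by
    apply Integrable.mono' (aux_deriv_int φ).norm
      (((aux_deriv_int φ).aestronglyMeasurable).mul hvc.aestronglyMeasurable)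
    filter_upwards with τ
    simp only [Pi.mul_apply, norm_mul]
    calc ‖deriv (⇑φ) τ‖ * ‖v τ‖ ≤ ‖deriv (⇑φ) τ‖ * 1 :=
          mul_le_mul_of_nonneg_left (hvle τ) (norm_nonneg _)
      _ = ‖deriv (⇑φ) τ‖ := mul_one _
  have huv : Integrable (⇑φ * v) volume := by
    apply Integrable.mono' φ.integrable.norm
      (hcont.mul hvc).aestronglyMeasurable
    filter_upwards with τ
    simp only [Pi.mul_apply, norm_mul]
    calc ‖φ τ‖ * ‖v τ‖ ≤ ‖φ τ‖ * 1 :=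
          mul_le_mul_of_nonneg_left (hvle τ) (norm_nonneg _)
      _ = ‖φ τ‖ := mul_one _
  exact MeasureTheory.integral_mul_deriv_eq_deriv_mul_of_integrable
    (fun x _ => φ.differentiableAt.hasDerivAt)
    (fun x _ => aux_deriv a ε x hε) huv' hu'v huv

lemma aux_fubini (φ : SchwartzMap ℝ ℂ) (Φ : EuclideanSpace ℝ (Fin 4) → ℂ)
    (hΦ : ∀ x : EuclideanSpace ℝ (Fin 4),
      Φ x = ∫ τ : ℝ, Complex.exp (Complex.I * (π : ℂ) * (τ : ℂ) * (‖x‖ : ℂ) ^ 2) * φ τ)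
    (y : EuclideanSpace ℝ (Fin 4)) (ε : ℝ) (hε : 0 < ε) :
    ∫ x : EuclideanSpace ℝ (Fin 4), Φ x * Complex.exp (-((π*ε : ℝ):ℂ) * (‖x‖:ℂ)^2) *
        Complex.exp (-(2 * (π : ℂ) * Complex.I * (⟪x, y⟫ : ℂ)))
      = ∫ τ : ℝ, φ τ * ((((ε:ℂ) - Complex.I * τ)^2)⁻¹ *
          Complex.exp (-((π * ‖y‖^2 : ℝ):ℂ) * ((ε:ℂ) - Complex.I * τ)⁻¹)) := by
  let E := EuclideanSpace ℝ (Fin 4)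
  set b : ℝ → ℂ := fun τ => (π:ℂ) * ((ε:ℂ) - Complex.I * τ) with hb
  have hbre : ∀ τ, 0 < (b τ).re := by
    intro τ
    rw [hb]
    simp only [Complex.re_ofReal_mul]
    have : ((ε:ℂ) - Complex.I * τ).re = ε := by simp
    rw [this]
    positivity
  set f : E → ℝ → ℂ := fun x τ =>
    φ τ * (Complex.exp (((-2 * π * ⟪x, y⟫ : ℝ):ℂ) * Complex.I) *
      Complex.exp (-(b τ) * (‖x‖:ℂ)^2)) with hf
  -- step 1 : rewrite LHS as iterated integral
  have step1 : ∀ x : E, Φ x * Complex.exp (-((π*ε : ℝ):ℂ) * (‖x‖:ℂ)^2) *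
        Complex.exp (-(2 * (π : ℂ) * Complex.I * (⟪x, y⟫ : ℂ)))
      = ∫ τ : ℝ, f x τ := by
    intro x
    rw [hΦ x, mul_assoc, ← MeasureTheory.integral_mul_const]
    congr 1
    funext τ
    rw [hf]
    have e1 : Complex.exp (Complex.I * (π : ℂ) * (τ : ℂ) * (‖x‖ : ℂ) ^ 2) *
        (Complex.exp (-((π*ε : ℝ):ℂ) * (‖x‖:ℂ)^2) *
          Complex.exp (-(2 * (π : ℂ) * Complex.I * (⟪x, y⟫ : ℂ))))
        = Complex.exp (((-2 * π * ⟪x, y⟫ : ℝ):ℂ) * Complex.I) *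
            Complex.exp (-(b τ) * (‖x‖:ℂ)^2) := by
      rw [← Complex.exp_add, ← Complex.exp_add, ← Complex.exp_add]
      congr 1
      rw [hb]
      push_cast
      ring
    calc Complex.exp (Complex.I * (π : ℂ) * (τ : ℂ) * (‖x‖ : ℂ) ^ 2) * φ τ *
          (Complex.exp (-((π*ε : ℝ):ℂ) * (‖x‖:ℂ)^2) *
            Complex.exp (-(2 * (π : ℂ) * Complex.I * (⟪x, y⟫ : ℂ))))
        = φ τ * (Complex.exp (Complex.I * (π : ℂ) * (τ : ℂ) * (‖x‖ : ℂ) ^ 2) *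
            (Complex.exp (-((π*ε : ℝ):ℂ) * (‖x‖:ℂ)^2) *
              Complex.exp (-(2 * (π : ℂ) * Complex.I * (⟪x, y⟫ : ℂ))))) := by ring
      _ = _ := by rw [e1]
  have hbc : Continuous b := by
    rw [hb]; continuity
  have hmeas : AEStronglyMeasurable (Function.uncurry f)
      ((volume : Measure (EuclideanSpace ℝ (Fin 4))).prod volume) := by
    apply Continuous.aestronglyMeasurable
    apply Continuous.mul
    · exact φ.continuous.comp continuous_snd
    · apply Continuous.mul
      · apply Complex.continuous_exp.comp
        apply Continuous.mul _ continuous_const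
        apply Complex.continuous_ofReal.comp
        exact (continuous_const.mul (Continuous.inner continuous_fst continuous_const))
      · apply Complex.continuous_exp.comp
        exact ((hbc.comp continuous_snd).neg.mul
          ((Complex.continuous_ofReal.comp (continuous_norm.comp continuous_fst)).pow 2))
  have hre : (0:ℝ) < ((π*ε : ℝ):ℂ).re := by
    simpa using mul_pos pi_pos hε
  have hgauss : Integrable (fun x : EuclideanSpace ℝ (Fin 4) =>
      Real.exp (-(π*ε) * ‖x‖^2)) volume := by
    have h := (GaussianFourier.integrable_cexp_neg_mul_sq_norm_add (V := EuclideanSpace ℝ (Fin 4))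
      hre 0 (0 : EuclideanSpace ℝ (Fin 4))).norm
    apply h.congr
    filter_upwards with x
    rw [Complex.norm_exp]
    congr 1
    have : -((π*ε : ℝ):ℂ) * (‖x‖:ℂ)^2 + 0 * (⟪(0 : EuclideanSpace ℝ (Fin 4)), x⟫ : ℂ)
        = ((-(π*ε) * ‖x‖^2 : ℝ):ℂ) := by push_cast; ring
    rw [this, Complex.ofReal_re]
  have hprod : Integrable (fun p : EuclideanSpace ℝ (Fin 4) × ℝ =>
      Real.exp (-(π*ε) * ‖p.1‖^2) * ‖φ p.2‖)
      ((volume : Measure (EuclideanSpace ℝ (Fin 4))).prod volume) :=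
    hgauss.mul_prod φ.integrable.norm
  have hint : Integrable (Function.uncurry f)
      ((volume : Measure (EuclideanSpace ℝ (Fin 4))).prod volume) := by
    apply hprod.mono' hmeas
    filter_upwards with p
    obtain ⟨x, τ⟩ := p
    rw [Function.uncurry_apply_pair, hf]
    simp only [norm_mul]
    have h1 : ‖Complex.exp (((-2 * π * ⟪x, y⟫ : ℝ):ℂ) * Complex.I)‖ = 1 := by
      rw [Complex.norm_exp]
      simp
    have h2 : ‖Complex.exp (-(b τ) * (‖x‖:ℂ)^2)‖ = Real.exp (-(π*ε) * ‖x‖^2) := by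
      rw [Complex.norm_exp]
      congr 1
      have e3 : -(b τ) * (‖x‖:ℂ)^2 = ((‖x‖^2 : ℝ):ℂ) * (-(b τ)) := by push_cast; ring
      rw [e3, Complex.re_ofReal_mul, hb]
      simp only [Complex.neg_re, Complex.re_ofReal_mul]
      have : ((ε:ℂ) - Complex.I * τ).re = ε := by simp
      rw [this]
      ring
    rw [h1, h2]
    exact le_of_eq (by ring)
  -- swap and evaluate inner integral
  simp only [step1]
  rw [MeasureTheory.integral_integral_swap hint]
  congr 1
  funext τ
  rw [hf]
  simp only []
  rw [MeasureTheory.integral_const_mul]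
  congr 1
  have hFT := fourier_gaussian_innerProductSpace (b := b τ) (hbre τ) y
  rw [Real.fourier_eq'] at hFT
  simp only [smul_eq_mul] at hFT
  have hlhs : (∫ x : EuclideanSpace ℝ (Fin 4),
      Complex.exp (((-2 * π * ⟪x, y⟫ : ℝ):ℂ) * Complex.I) * Complex.exp (-(b τ) * (‖x‖:ℂ)^2))
      = (π / b τ) ^ ((Module.finrank ℝ (EuclideanSpace ℝ (Fin 4)) : ℂ) / 2) *
        Complex.exp (-(π:ℂ)^2 * (‖y‖:ℂ)^2 / b τ) := by
    rw [← hFT]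
  rw [hlhs]
  have hfr : ((Module.finrank ℝ (EuclideanSpace ℝ (Fin 4)) : ℂ) / 2) = ((2:ℕ):ℂ) := by
    rw [finrank_euclideanSpace_fin]
    norm_num
  rw [hfr, Complex.cpow_natCast]
  congr 1
  · rw [hb]
    have hπ : ((π:ℝ):ℂ) ≠ 0 := Complex.ofReal_ne_zero.mpr pi_ne_zero
    show ((π:ℂ) / ((π:ℂ) * ((ε:ℂ) - Complex.I * τ)))^2 = (((ε:ℂ) - Complex.I * τ)^2)⁻¹
    rw [div_pow, mul_pow, ← div_div, div_self (pow_ne_zero 2 hπ)]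
    simp [one_div]
  · congr 1
    rw [hb]
    have hπ : ((π:ℝ):ℂ) ≠ 0 := Complex.ofReal_ne_zero.mpr pi_ne_zero
    have hne := aux_ne ε τ hε
    push_cast
    field_simp

lemma aux_Phi_integrable (g : SchwartzMap ℝ ℂ) (Φ : EuclideanSpace ℝ (Fin 4) → ℂ)
    (hΦg : ∀ x, Φ x = g (-(‖x‖^2/2))) : Integrable Φ volume := by
  obtain ⟨C0, hC0p, hC0⟩ := g.decay 0 0
  obtain ⟨C3, hC3p, hC3⟩ := g.decay 3 0
  have hb : ∀ ξ : ℝ, (1 + |ξ|)^3 * ‖g ξ‖ ≤ 8 * (C0 + C3) := by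
    intro ξ
    have h0 := hC0 ξ
    have h3 := hC3 ξ
    simp only [norm_iteratedFDeriv_zero, pow_zero, one_mul, Real.norm_eq_abs] at h0 h3
    have habs : (0:ℝ) ≤ |ξ| := abs_nonneg ξ
    have hgn : (0:ℝ) ≤ ‖g ξ‖ := norm_nonneg _
    nlinarith [pow_nonneg habs 2, pow_nonneg habs 3, sq_nonneg (1 - |ξ|), sq_nonneg (|ξ| - 1),
      mul_nonneg (mul_nonneg habs habs) hgn, mul_nonneg habs hgn]
  have key : ∀ x : EuclideanSpace ℝ (Fin 4), ‖Φ x‖ ≤ (512 * (C0 + C3)) * (1 + ‖x‖) ^ (-(6:ℝ)) := by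
    intro x
    have hx : (0:ℝ) ≤ ‖x‖ := norm_nonneg x
    set ξ : ℝ := -(‖x‖^2/2) with hξ
    have h1 : (1 + ‖x‖)^2 ≤ 4 * (1 + |ξ|) := by
      rw [hξ, abs_of_nonpos (neg_nonpos.mpr (by positivity)), neg_neg]
      nlinarith [sq_nonneg (‖x‖ - 1)]
    have h1c : ((1 + ‖x‖)^2)^3 ≤ (4 * (1 + |ξ|))^3 := pow_le_pow_left₀ (by positivity) h1 3
    have h2 : (1 + ‖x‖)^6 * ‖Φ x‖ ≤ 512 * (C0 + C3) := by
      rw [hΦg x, ← hξ]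
      calc (1 + ‖x‖)^6 * ‖g ξ‖ = ((1 + ‖x‖)^2)^3 * ‖g ξ‖ := by ring
        _ ≤ (4 * (1 + |ξ|))^3 * ‖g ξ‖ := mul_le_mul_of_nonneg_right h1c (norm_nonneg _)
        _ = 64 * ((1 + |ξ|)^3 * ‖g ξ‖) := by ring
        _ ≤ 64 * (8 * (C0 + C3)) := by have := hb ξ; linarith
        _ = 512 * (C0 + C3) := by ring
    rw [Real.rpow_neg (by positivity), show ((6:ℝ)) = ((6:ℕ):ℝ) by norm_num,
      Real.rpow_natCast, ← div_eq_mul_inv, le_div_iff₀ (by positivity), mul_comm]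
    exact h2
  have hint : Integrable (fun x : EuclideanSpace ℝ (Fin 4) =>
      (512 * (C0 + C3)) * (1 + ‖x‖) ^ (-(6:ℝ))) volume := by
    apply Integrable.const_mul
    apply integrable_one_add_norm
    rw [finrank_euclideanSpace_fin]
    norm_num
  have hc : Continuous Φ := by
    have : Φ = fun x => g (-(‖x‖^2/2)) := funext hΦg
    rw [this]
    exact g.continuous.comp (by continuity)
  exact hint.mono' hc.aestronglyMeasurable (ae_of_all _ key)

/-- For a Schwartz function `φ : ℝ → ℂ`, the function
`Φ(x) = ∫ e^{iπτ|x|²} φ(τ) dτ` on `ℝ⁴` is integrable, and its Fourier transform satisfies,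
for `y ≠ 0`, `Φ̂(y) = (1/(iπ|y|²)) ∫ φ'(τ) e^{-iπ|y|²/τ} dτ`. -/
theorem fourier_transform_Phi
    (φ : SchwartzMap ℝ ℂ)
    (Φ : EuclideanSpace ℝ (Fin 4) → ℂ)
    (hΦ : ∀ x : EuclideanSpace ℝ (Fin 4),
      Φ x = ∫ τ : ℝ, Complex.exp (Complex.I * (π : ℂ) * (τ : ℂ) * (‖x‖ : ℂ) ^ 2) * φ τ) :
    Integrable Φ volume ∧
    ∀ y : EuclideanSpace ℝ (Fin 4), y ≠ 0 →
      (∫ x : EuclideanSpace ℝ (Fin 4),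
          Φ x * Complex.exp (-(2 * (π : ℂ) * Complex.I * (⟪x, y⟫ : ℂ)))) =
        (1 / (Complex.I * (π : ℂ) * (‖y‖ : ℂ) ^ 2)) *
          ∫ τ : ℝ, deriv (⇑φ) τ *
            Complex.exp (-(Complex.I * (π : ℂ) * (‖y‖ : ℂ) ^ 2) / (τ : ℂ)) := by
  -- `Φ` is the 1-dimensional Fourier transform of `φ` evaluated at `-‖x‖²/2`.
  have hΦg : ∀ x : EuclideanSpace ℝ (Fin 4),
      Φ x = (SchwartzMap.fourierTransformCLM ℂ φ) (-(‖x‖^2/2)) := by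
    intro x
    rw [hΦ]
    have h1 : (SchwartzMap.fourierTransformCLM ℂ φ) (-(‖x‖^2/2))
        = 𝓕 (⇑φ) (-(‖x‖^2/2)) := rfl
    rw [h1, Real.fourier_eq']
    congr 1; funext τ
    rw [smul_eq_mul]
    congr 2
    have h2 : (⟪τ, -(‖x‖^2/2)⟫ : ℝ) = τ * (-(‖x‖^2/2)) := by simp [mul_comm]
    rw [h2]
    push_cast
    ring
  have hΦc : Continuous Φ := by
    have h3 : Φ = fun x => (SchwartzMap.fourierTransformCLM ℂ φ) (-(‖x‖^2/2)) := funext hΦg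
    rw [h3]
    exact (SchwartzMap.fourierTransformCLM ℂ φ).continuous.comp (by continuity)
  have hΦint : Integrable Φ volume := aux_Phi_integrable _ Φ hΦg
  refine ⟨hΦint, ?_⟩
  intro y hy
  have hya : (0:ℝ) < π * ‖y‖^2 := by
    have : 0 < ‖y‖ := norm_pos_iff.mpr hy
    positivity
  have hIa : Complex.I * ((π * ‖y‖^2 : ℝ):ℂ) ≠ 0 :=
    mul_ne_zero Complex.I_ne_zero (Complex.ofReal_ne_zero.mpr (ne_of_gt hya))
  set ε : ℕ → ℝ := fun n => 1 / ((n:ℝ)+1) with hε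
  have hεpos : ∀ n, 0 < ε n := fun n => by positivity
  have hεt : Tendsto ε atTop (nhds 0) := tendsto_one_div_add_atTop_nhds_zero_nat
  -- the two expressions for the regularized integral
  have keyn : ∀ n, (∫ x : EuclideanSpace ℝ (Fin 4),
        Φ x * Complex.exp (-((π * ε n : ℝ):ℂ) * (‖x‖:ℂ)^2) *
          Complex.exp (-(2 * (π : ℂ) * Complex.I * (⟪x, y⟫ : ℂ))))
      = (Complex.I * ((π * ‖y‖^2 : ℝ):ℂ))⁻¹ *
        ∫ τ : ℝ, deriv (⇑φ) τ *
          Complex.exp (-((π * ‖y‖^2 : ℝ):ℂ) * (((ε n : ℝ):ℂ) - Complex.I * τ)⁻¹) := by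
    intro n
    rw [aux_fubini φ Φ hΦ y (ε n) (hεpos n)]
    have e1 : (fun τ : ℝ => φ τ * (((((ε n : ℝ):ℂ) - Complex.I * τ)^2)⁻¹ *
          Complex.exp (-((π * ‖y‖^2 : ℝ):ℂ) * (((ε n : ℝ):ℂ) - Complex.I * τ)⁻¹)))
        = fun τ : ℝ => (-(Complex.I * ((π * ‖y‖^2 : ℝ):ℂ)))⁻¹ *
            (φ τ * (-(Complex.I * ((π * ‖y‖^2 : ℝ):ℂ)) / (((ε n : ℝ):ℂ) - Complex.I * τ)^2 *
              Complex.exp (-((π * ‖y‖^2 : ℝ):ℂ) * (((ε n : ℝ):ℂ) - Complex.I * τ)⁻¹))) := by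
      funext τ
      have e2 : (-(Complex.I * ((π * ‖y‖^2 : ℝ):ℂ)))⁻¹ *
            (φ τ * (-(Complex.I * ((π * ‖y‖^2 : ℝ):ℂ)) / (((ε n : ℝ):ℂ) - Complex.I * τ)^2 *
              Complex.exp (-((π * ‖y‖^2 : ℝ):ℂ) * (((ε n : ℝ):ℂ) - Complex.I * τ)⁻¹)))
          = ((-(Complex.I * ((π * ‖y‖^2 : ℝ):ℂ)))⁻¹ * (-(Complex.I * ((π * ‖y‖^2 : ℝ):ℂ)))) *
            (φ τ * (((((ε n : ℝ):ℂ) - Complex.I * τ)^2)⁻¹ *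
              Complex.exp (-((π * ‖y‖^2 : ℝ):ℂ) * (((ε n : ℝ):ℂ) - Complex.I * τ)⁻¹))) := by
        ring
      rw [e2, inv_mul_cancel₀ (neg_ne_zero.mpr hIa), one_mul]
    rw [e1, MeasureTheory.integral_const_mul,
      aux_ibp φ (π * ‖y‖^2) (ε n) hya (hεpos n), inv_neg, neg_mul_neg]
  -- limit of the left-hand sides
  have hCc : Continuous (fun x : EuclideanSpace ℝ (Fin 4) =>
      Complex.exp (-(2 * (π : ℂ) * Complex.I * (⟪x, y⟫ : ℂ)))) := by
    apply Complex.continuous_exp.comp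
    apply Continuous.neg
    apply Continuous.mul continuous_const
    exact Complex.continuous_ofReal.comp (Continuous.inner continuous_id continuous_const)
  have hAlim : Tendsto (fun n => ∫ x : EuclideanSpace ℝ (Fin 4),
        Φ x * Complex.exp (-((π * ε n : ℝ):ℂ) * (‖x‖:ℂ)^2) *
          Complex.exp (-(2 * (π : ℂ) * Complex.I * (⟪x, y⟫ : ℂ)))) atTop
      (nhds (∫ x : EuclideanSpace ℝ (Fin 4),
        Φ x * Complex.exp (-(2 * (π : ℂ) * Complex.I * (⟪x, y⟫ : ℂ))))) := by
    apply MeasureTheory.tendsto_integral_of_dominated_convergence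
      (bound := fun x => ‖Φ x‖)
    · intro n
      apply Continuous.aestronglyMeasurable
      have hgc : Continuous (fun x : EuclideanSpace ℝ (Fin 4) =>
          Complex.exp (-((π * ε n : ℝ):ℂ) * (‖x‖:ℂ)^2)) := by
        apply Complex.continuous_exp.comp
        exact (continuous_const.mul ((Complex.continuous_ofReal.comp continuous_norm).pow 2))
      exact (hΦc.mul hgc).mul hCc
    · exact hΦint.norm
    · intro n
      filter_upwards with x
      rw [norm_mul, norm_mul]
      have h1 : ‖Complex.exp (-((π * ε n : ℝ):ℂ) * (‖x‖:ℂ)^2)‖ ≤ 1 := by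
        rw [Complex.norm_exp, Real.exp_le_one_iff]
        have e2 : -((π * ε n : ℝ):ℂ) * (‖x‖:ℂ)^2 = ((-(π * ε n) * ‖x‖^2 : ℝ):ℂ) := by
          push_cast; ring
        rw [e2, Complex.ofReal_re]
        have h9 : 0 ≤ π * ε n * ‖x‖^2 := by
          have := (hεpos n).le
          positivity
        linarith
      have h2 : ‖Complex.exp (-(2 * (π : ℂ) * Complex.I * (⟪x, y⟫ : ℂ)))‖ = 1 := by
        rw [Complex.norm_exp]
        have e3 : (-(2 * (π : ℂ) * Complex.I * (⟪x, y⟫ : ℂ))).re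
            = ((-2 * π * ⟪x, y⟫ : ℝ) * (Complex.I).re) := by
          have e4 : -(2 * (π : ℂ) * Complex.I * (⟪x, y⟫ : ℂ))
              = ((-2 * π * ⟪x, y⟫ : ℝ):ℂ) * Complex.I := by push_cast; ring
          rw [e4, Complex.re_ofReal_mul]
        rw [e3]
        simp
      rw [h2, mul_one]
      calc ‖Φ x‖ * ‖Complex.exp (-((π * ε n : ℝ):ℂ) * (‖x‖:ℂ)^2)‖
          ≤ ‖Φ x‖ * 1 := mul_le_mul_of_nonneg_left h1 (norm_nonneg _)
        _ = ‖Φ x‖ := mul_one _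
    · filter_upwards with x
      have hc2 : Continuous (fun e : ℝ =>
          Φ x * Complex.exp (-((π * e : ℝ):ℂ) * (‖x‖:ℂ)^2) *
            Complex.exp (-(2 * (π : ℂ) * Complex.I * (⟪x, y⟫ : ℂ)))) := by
        apply Continuous.mul _ continuous_const
        apply Continuous.mul continuous_const
        apply Complex.continuous_exp.comp
        exact ((Complex.continuous_ofReal.comp
          (continuous_const.mul continuous_id)).neg.mul continuous_const)
      have h5 := (hc2.continuousAt (x := 0)).tendsto.comp hεt
      simpa [Function.comp_def] using h5
  -- limit of the right-hand sides
  have hτae : ∀ᵐ (τ : ℝ) ∂(volume : Measure ℝ), τ ≠ 0 := by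
    refine ae_iff.mpr ?_
    have h6 : {τ : ℝ | ¬ τ ≠ 0} = {0} := by ext; simp
    rw [h6]
    exact Real.volume_singleton
  have hBlim : Tendsto (fun n => ∫ τ : ℝ, deriv (⇑φ) τ *
        Complex.exp (-((π * ‖y‖^2 : ℝ):ℂ) * (((ε n : ℝ):ℂ) - Complex.I * τ)⁻¹)) atTop
      (nhds (∫ τ : ℝ, deriv (⇑φ) τ *
        Complex.exp (-(Complex.I * (π : ℂ) * (‖y‖ : ℂ) ^ 2) / (τ : ℂ)))) := by
    apply MeasureTheory.tendsto_integral_of_dominated_convergence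
      (bound := fun τ => ‖deriv (⇑φ) τ‖)
    · intro n
      apply Continuous.aestronglyMeasurable
      apply Continuous.mul
      · have h : deriv ⇑φ = ⇑(SchwartzMap.derivCLM ℝ ℂ φ) :=
          funext fun x => (SchwartzMap.derivCLM_apply ℝ φ x).symm
        rw [h]
        exact (SchwartzMap.derivCLM ℝ ℂ φ).continuous
      · exact Complex.continuous_exp.comp (continuous_const.mul
          ((aux_wc (ε n)).inv₀ fun τ => aux_ne _ τ (hεpos n)))
    · exact (aux_deriv_int φ).norm
    · intro n
      filter_upwards with τ
      rw [norm_mul]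
      calc ‖deriv (⇑φ) τ‖ * ‖Complex.exp (-((π * ‖y‖^2 : ℝ):ℂ) *
            (((ε n : ℝ):ℂ) - Complex.I * τ)⁻¹)‖
          ≤ ‖deriv (⇑φ) τ‖ * 1 :=
            mul_le_mul_of_nonneg_left (aux_norm_le _ _ τ hya.le (hεpos n).le) (norm_nonneg _)
        _ = ‖deriv (⇑φ) τ‖ := mul_one _
    · filter_upwards [hτae] with τ hτ
      have hττ : (((0:ℝ)):ℂ) - Complex.I * τ ≠ 0 := by
        intro h
        have := congrArg Complex.im h
        simp at this
        exact hτ this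
      have hc3 : ContinuousAt (fun e : ℝ =>
          Complex.exp (-((π * ‖y‖^2 : ℝ):ℂ) * (((e : ℝ):ℂ) - Complex.I * τ)⁻¹)) 0 := by
        apply Complex.continuous_exp.continuousAt.comp
        apply ContinuousAt.mul continuousAt_const
        exact ((Complex.continuous_ofReal.continuousAt).sub continuousAt_const).inv₀ hττ
      have h7 := (hc3.tendsto.comp hεt).const_mul (deriv (⇑φ) τ)
      have h8 : -((π * ‖y‖^2 : ℝ):ℂ) * ((((0:ℝ)):ℂ) - Complex.I * τ)⁻¹
          = -(Complex.I * (π : ℂ) * (‖y‖ : ℂ) ^ 2) / (τ : ℂ) := by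
        have hτ' : (τ:ℂ) ≠ 0 := Complex.ofReal_ne_zero.mpr hτ
        rw [Complex.ofReal_zero, zero_sub, inv_neg, mul_inv, Complex.inv_I]
        push_cast
        field_simp
      rw [h8] at h7
      simpa [Function.comp] using h7
  -- assemble
  have hAlim' : Tendsto (fun n => (Complex.I * ((π * ‖y‖^2 : ℝ):ℂ))⁻¹ *
        ∫ τ : ℝ, deriv (⇑φ) τ *
          Complex.exp (-((π * ‖y‖^2 : ℝ):ℂ) * (((ε n : ℝ):ℂ) - Complex.I * τ)⁻¹)) atTop
      (nhds (∫ x : EuclideanSpace ℝ (Fin 4),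
        Φ x * Complex.exp (-(2 * (π : ℂ) * Complex.I * (⟪x, y⟫ : ℂ))))) := by
    have := hAlim
    rw [show (fun n => ∫ x : EuclideanSpace ℝ (Fin 4),
        Φ x * Complex.exp (-((π * ε n : ℝ):ℂ) * (‖x‖:ℂ)^2) *
          Complex.exp (-(2 * (π : ℂ) * Complex.I * (⟪x, y⟫ : ℂ))))
      = fun n => (Complex.I * ((π * ‖y‖^2 : ℝ):ℂ))⁻¹ *
        ∫ τ : ℝ, deriv (⇑φ) τ *
          Complex.exp (-((π * ‖y‖^2 : ℝ):ℂ) * (((ε n : ℝ):ℂ) - Complex.I * τ)⁻¹)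
      from funext keyn] at this
    exact this
  have hfinal := tendsto_nhds_unique hAlim' (hBlim.const_mul
    (Complex.I * ((π * ‖y‖^2 : ℝ):ℂ))⁻¹)
  rw [hfinal, one_div]
  congr 2
  push_cast
  ring
end
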